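/- Let k be an algebraically closed field of characteristic 3. A homogeneous quartic f ∈ k[x0,x1,x2] is invariant under the substitution g: (x0,x1,x2) ↦ (x0+x1, x1, x2) if and only if f can be written as f1(x1,x2)·(x0^3 − x0·x1^2) + f4(x1,x2), where f1 and f4 are homogeneous of degrees 1 and 4 in x1, x2. -/

import Mathlib

open MvPolynomial

/-- In characteristic 3, a homogeneous quartic is invariant under
`(x0,x1,x2) ↦ (x0+x1,x1,x2)` iff it has the form `f1(x1,x2)(x0^3 - x0 x1^2) + f4(x1,x2)`. -/
theorem stmt_3 (k : Type*) [Field k] [IsAlgClosed k] [CharP k 3]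
    (f : MvPolynomial (Fin 3) k) (hf : f.IsHomogeneous 4) :
    aeval ![X 0 + X 1, X 1, X 2] f = f ↔
      ∃ f1 f4 : MvPolynomial (Fin 2) k, f1.IsHomogeneous 1 ∧ f4.IsHomogeneous 4 ∧
        f = aeval ![X 1, X 2] f1 * (X 0 ^ 3 - X 0 * X 1 ^ 2) + aeval ![X 1, X 2] f4 := by
  classical
  haveI : Fact (Nat.Prime 3) := ⟨by norm_num⟩
  set e := MvPolynomial.finSuccEquiv k 2 with he
  set A : MvPolynomial (Fin 2) k →ₐ[k] MvPolynomial (Fin 3) k := aeval ![X 1, X 2] with hA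
  set g : MvPolynomial (Fin 3) k →ₐ[k] MvPolynomial (Fin 3) k :=
    aeval ![X 0 + X 1, X 1, X 2] with hg
  -- e sends the embedded Fin-2 polynomials to constants
  have hX1 : (X 1 : MvPolynomial (Fin 3) k) = X (Fin.succ 0) := by norm_num
  have hX2 : (X 2 : MvPolynomial (Fin 3) k) = X (Fin.succ 1) := by norm_num
  have heX0 : e (X 0 : MvPolynomial (Fin 3) k) = Polynomial.X :=
    MvPolynomial.finSuccEquiv_X_zero
  have heX1 : e (X 1 : MvPolynomial (Fin 3) k) = Polynomial.C (X 0) := by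
    rw [hX1]; exact MvPolynomial.finSuccEquiv_X_succ
  have heX2 : e (X 2 : MvPolynomial (Fin 3) k) = Polynomial.C (X 1) := by
    rw [hX2]; exact MvPolynomial.finSuccEquiv_X_succ
  have hAX : ∀ j : Fin 2, A (X j) = ![X 1, X 2] j := fun j => aeval_X _ j
  have heA : ∀ q : MvPolynomial (Fin 2) k, e (A q) = Polynomial.C q := by
    intro q
    induction q using MvPolynomial.induction_on with
    | C a =>
      rw [hA, aeval_C, he]
      simp [algebraMap_eq, MvPolynomial.finSuccEquiv_apply]
    | add p q hp hq => rw [map_add, map_add, hp, hq, map_add]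
    | mul_X p j hp =>
      rw [map_mul, map_mul, hp, hAX, map_mul]
      fin_cases j
      · exact congrArg (fun t => Polynomial.C p * t) heX1
      · exact congrArg (fun t => Polynomial.C p * t) heX2
  have hgX0 : g (X 0) = X 0 + X 1 := by
    rw [hg, aeval_X]; rfl
  have hgX1 : g (X 1) = X 1 := by
    rw [hg, aeval_X]; rfl
  have hgX2 : g (X 2) = X 2 := by
    rw [hg, aeval_X]; rfl
  have hgA : ∀ q : MvPolynomial (Fin 2) k, g (A q) = A q := by
    intro q
    induction q using MvPolynomial.induction_on with
    | C a => rw [hA, aeval_C]; exact aeval_C _ a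
    | add p q hp hq => rw [map_add, map_add, hp, hq]
    | mul_X p j hp =>
      rw [map_mul, map_mul, hp, hAX]
      fin_cases j
      · exact congrArg (fun t => A p * t) hgX1
      · exact congrArg (fun t => A p * t) hgX2
  constructor
  · intro h
    set P := e f with hP
    set c : ℕ → MvPolynomial (Fin 2) k := fun i => P.coeff i with hc
    have hdeg : P.natDegree < 5 := by
      have h1 : P.natDegree = f.degreeOf 0 := natDegree_finSuccEquiv f
      have h2 : f.degreeOf 0 ≤ f.totalDegree := degreeOf_le_totalDegree f 0
      have h3 : f.totalDegree ≤ 4 := hf.totalDegree_le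
      omega
    have hPsum : P = Polynomial.C (c 0) + Polynomial.C (c 1) * Polynomial.X
        + Polynomial.C (c 2) * Polynomial.X ^ 2 + Polynomial.C (c 3) * Polynomial.X ^ 3
        + Polynomial.C (c 4) * Polynomial.X ^ 4 := by
      have := P.as_sum_range' 5 hdeg
      rw [this]
      simp [Finset.sum_range_succ, ← Polynomial.C_mul_X_pow_eq_monomial]
      rfl
    have hf_eq : f = A (c 0) + A (c 1) * X 0 + A (c 2) * X 0 ^ 2
        + A (c 3) * X 0 ^ 3 + A (c 4) * X 0 ^ 4 := by
      apply e.injective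
      rw [← hP, hPsum]
      simp only [map_add, map_mul, map_pow, heA, heX0]
    have H0 : g f = f := h
    rw [hf_eq] at H0
    simp only [map_add, map_mul, map_pow, hgA, hgX0] at H0
    have H := congrArg e H0
    simp only [map_add, map_mul, map_pow, heA, heX0, heX1] at H
    set y : MvPolynomial (Fin 2) k := X 0 with hy
    have h3 : (3 : MvPolynomial (Fin 2) k) = 0 := by
      exact_mod_cast CharP.cast_eq_zero (MvPolynomial (Fin 2) k) 3
    have E3 := congrArg (fun p => p.coeff 3) H
    have E1 := congrArg (fun p => p.coeff 1) H
    have E0 := congrArg (fun p => p.coeff 0) H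
    simp only [Polynomial.coeff_add, Polynomial.coeff_C_mul, Polynomial.coeff_X_add_C_pow,
      Polynomial.coeff_X_pow, Polynomial.coeff_C, Polynomial.coeff_X, Polynomial.coeff_one] at E3 E1 E0
    norm_num at E3 E1 E0
    -- derive the coefficient relations
    have hy0 : y ≠ 0 := MvPolynomial.X_ne_zero 0
    have h41 : (4 : MvPolynomial (Fin 2) k) = 1 := by linear_combination h3
    have hc4 : c 4 = 0 := by
      rcases E3 with h' | h' | h'
      · exact h'
      · exact absurd h' hy0
      · rw [h41] at h'; exact absurd h' one_ne_zero
    have hc2 : c 2 = 0 := by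
      have hyc2 : y * c 2 = 0 := by
        linear_combination 2 * E1 - (y * c 2 + 2 * y ^ 2 * c 3) * h3 - 8 * y ^ 3 * hc4
      rcases mul_eq_zero.mp hyc2 with h' | h'
      · exact absurd h' hy0
      · exact h'
    have hc1 : c 1 = -(y ^ 2 * c 3) := by
      have hyc1 : y * (c 1 + y ^ 2 * c 3) = 0 := by
        linear_combination E0 - y ^ 2 * hc2 - y ^ 4 * hc4
      rcases mul_eq_zero.mp hyc1 with h' | h'
      · exact absurd h' hy0
      · linear_combination h'
    refine ⟨c 3, c 0, ?_, ?_, ?_⟩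
    · exact hf.finSuccEquiv_coeff_isHomogeneous 3 1 rfl
    · exact hf.finSuccEquiv_coeff_isHomogeneous 0 4 rfl
    · have hAy : A y = X 1 := hAX 0
      rw [hf_eq, hc4, hc2, hc1]
      show _ = A (c 3) * _ + A (c 0)
      rw [map_neg, map_mul, map_pow, hAy, map_zero]
      ring
  · rintro ⟨f1, f4, h1, h4, rfl⟩
    have hcube : (X 0 + X 1 : MvPolynomial (Fin 3) k) ^ 3 = X 0 ^ 3 + X 1 ^ 3 :=
      add_pow_char _ _ _
    show g _ = _
    simp only [map_add, map_mul, map_sub, map_pow, hgA, hgX0, hgX1]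
    rw [hcube]
    ring
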